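/- Let a < b, ω = π/(b−a), φ_m(x) = √2cos(mω(x−a)) for m ≥ 1 and φ_0 ≡ 1. Let n ≥ 1 and let (x_i, w_i) be the midpoint rule nodes x_i = a + (i−1/2)(b−a)/n with weights w_i = 1/n. Then for all integers j, k with 0 ≤ j < n and 0 ≤ k ≤ n: ∑_{i=1}^n w_iφ_j(x_i)φ_k(x_i) = δ_{j,k} = (1/(b−a))∫_a^b φ_jφ_k dx; i.e., the midpoint quadrature preserves the L² orthonormality of φ_0,…,φ_n restricted to these index ranges. -/

import Mathlib

open Real Finset intervalIntegral

lemma cos_prod (A B : ℝ) :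
    Real.cos A * Real.cos B = (Real.cos (A - B) + Real.cos (A + B)) / 2 := by
  rw [Real.cos_sub, Real.cos_add]; ring

lemma sin_half_ne (n : ℕ) (hn : 1 ≤ n) (r : ℝ) (h0 : r ≠ 0) (h1 : |r| < 2 * n) :
    Real.sin (r * Real.pi / (2 * n)) ≠ 0 := by
  have hn0 : (0:ℝ) < n := by exact_mod_cast hn
  have hπ := Real.pi_pos
  have habs : |r * Real.pi / (2 * n)| < Real.pi := by
    rw [abs_div, abs_mul, abs_of_pos hπ, abs_of_pos (by positivity : (0:ℝ) < 2 * n)]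
    rw [div_lt_iff₀ (by positivity)]
    calc |r| * Real.pi < (2 * n) * Real.pi := mul_lt_mul_of_pos_right h1 hπ
      _ = Real.pi * (2 * n) := by ring
  have h2 : r * Real.pi / (2 * n) ≠ 0 :=
    div_ne_zero (mul_ne_zero h0 hπ.ne') (by positivity)
  rw [ne_eq, Real.sin_eq_zero_iff_of_lt_of_lt (neg_lt_of_abs_lt habs) (lt_of_abs_lt habs)]
  exact h2

lemma cos_sum_zero (n : ℕ) (hn : 1 ≤ n) (r : ℝ) (hz : Real.sin (r * Real.pi) = 0)
    (hne : Real.sin (r * Real.pi / (2 * n)) ≠ 0) :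
    ∑ i ∈ Finset.Icc 1 n, Real.cos (((i : ℝ) - 1/2) * (r * Real.pi / n)) = 0 := by
  have hn0 : (n:ℝ) ≠ 0 := by positivity
  set θ := r * Real.pi / n with hθ
  have key : 2 * Real.sin (θ/2) * ∑ i ∈ Finset.Icc 1 n, Real.cos (((i : ℝ) - 1/2) * θ)
      = Real.sin (n * θ) - Real.sin (0 * θ) := by
    rw [Finset.mul_sum, ← Finset.Ico_add_one_right_eq_Icc, Finset.sum_Ico_eq_sum_range]
    have hcongr : ∀ i ∈ Finset.range (n + 1 - 1),
        2 * Real.sin (θ/2) * Real.cos (((1 + i : ℕ) - 1/2 : ℝ) * θ)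
        = Real.sin (((i+1 : ℕ):ℝ) * θ) - Real.sin ((i:ℝ) * θ) := by
      intro i _
      rw [Real.sin_sub_sin]
      push_cast
      ring_nf
    rw [Finset.sum_congr rfl (by intro i hi; push_cast; exact_mod_cast hcongr i hi)]
    have h := Finset.sum_range_sub (fun i : ℕ => Real.sin ((i:ℝ) * θ)) n
    simp only [Nat.add_sub_cancel]
    push_cast at h ⊢
    rw [h]
  have hnθ : (n:ℝ) * θ = r * Real.pi := by rw [hθ]; field_simp
  rw [hnθ, zero_mul, Real.sin_zero, hz, sub_zero] at key
  have h2 : 2 * Real.sin (θ/2) ≠ 0 := by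
    have he : θ / 2 = r * Real.pi / (2 * n) := by rw [hθ]; ring
    rw [he]
    exact mul_ne_zero two_ne_zero hne
  exact (mul_eq_zero.mp key).resolve_left h2

lemma int_cos (a b c : ℝ) (hc : c ≠ 0) :
    ∫ x in a..b, Real.cos (c * (x - a)) = Real.sin (c * (b - a)) / c := by
  rw [intervalIntegral.integral_comp_sub_right (fun y => Real.cos (c * y)) a]
  rw [intervalIntegral.integral_comp_mul_left (fun y => Real.cos y) hc]
  simp [integral_cos, smul_eq_mul, div_eq_inv_mul]


noncomputable def phiU (a ω : ℝ) (m : ℕ) (x : ℝ) : ℝ :=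
  if m = 0 then 1 else Real.sqrt 2 * Real.cos (m * ω * (x - a))

theorem stmt_18 (a b ω : ℝ) (hab : a < b) (hω : ω = Real.pi / (b - a))
    (n : ℕ) (hn : 1 ≤ n) (j k : ℕ) (hj : j < n) (hk : k ≤ n) :
    (∑ i ∈ Finset.Icc 1 n, (1 / (n : ℝ)) *
        phiU a ω j (a + ((i : ℝ) - 1/2) * (b - a) / n) *
        phiU a ω k (a + ((i : ℝ) - 1/2) * (b - a) / n)
      = if j = k then 1 else 0) ∧
    ((1 / (b - a)) * ∫ x in a..b, phiU a ω j x * phiU a ω k x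
      = if j = k then 1 else 0) := by
  have hπ := Real.pi_pos
  have hT : (0:ℝ) < b - a := sub_pos.mpr hab
  have hT0 : b - a ≠ 0 := hT.ne'
  have hn0 : (n:ℝ) ≠ 0 := by positivity
  have hωT : ω * (b - a) = π := by rw [hω]; field_simp
  have hω0 : ω ≠ 0 := by rw [hω]; exact div_ne_zero hπ.ne' hT0
  have node : ∀ (m i : ℕ),
      (m : ℝ) * ω * (a + ((i : ℝ) - 1/2) * (b - a) / n - a)
        = ((i : ℝ) - 1/2) * ((m : ℝ) * π / n) := by
    intro m i; rw [hω]; field_simp; ring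
  have h2 : Real.sqrt 2 * Real.sqrt 2 = 2 := Real.mul_self_sqrt (by norm_num)
  -- zero sum lemma, integer coefficient
  have sumz : ∀ z : ℤ, z ≠ 0 → |z| < 2 * (n:ℤ) →
      ∑ i ∈ Finset.Icc 1 n, Real.cos (((i : ℝ) - 1/2) * ((z:ℝ) * π / n)) = 0 := by
    intro z hz habs
    apply cos_sum_zero n hn
    · exact Real.sin_int_mul_pi z
    · apply sin_half_ne n hn
      · exact Int.cast_ne_zero.mpr hz
      · rw [← Int.cast_abs]
        exact_mod_cast habs
  -- zero integral lemma
  have intz : ∀ z : ℤ, z ≠ 0 → ∫ x in a..b, Real.cos ((z:ℝ) * ω * (x - a)) = 0 := by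
    intro z hz
    have hc : (z:ℝ) * ω ≠ 0 := mul_ne_zero (Int.cast_ne_zero.mpr hz) hω0
    rw [int_cos a b _ hc, mul_assoc, hωT, Real.sin_int_mul_pi, zero_div]
  constructor
  · -- quadrature sum
    by_cases hj0 : j = 0
    · subst hj0
      by_cases hk0 : k = 0
      · subst hk0
        rw [if_pos rfl]
        simp only [phiU, if_true, eq_self_iff_true, mul_one]
        rw [Finset.sum_const, Nat.card_Icc]
        simp
        field_simp
      · rw [if_neg (by omega)]
        have step : ∀ i ∈ Finset.Icc 1 n,
            (1 / (n : ℝ)) * phiU a ω 0 (a + ((i : ℝ) - 1/2) * (b - a) / n) *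
              phiU a ω k (a + ((i : ℝ) - 1/2) * (b - a) / n)
            = (Real.sqrt 2 / n) * Real.cos (((i : ℝ) - 1/2) * ((((k:ℤ)):ℝ) * π / n)) := by
          intro i _
          simp only [phiU, if_pos rfl, if_neg hk0, mul_one]
          rw [node k i]
          push_cast
          ring
        rw [Finset.sum_congr rfl step, ← Finset.mul_sum,
          sumz k (by exact_mod_cast hk0) (by rw [abs_lt]; omega), mul_zero]
    · by_cases hk0 : k = 0
      · subst hk0
        rw [if_neg (by omega)]
        have step : ∀ i ∈ Finset.Icc 1 n,
            (1 / (n : ℝ)) * phiU a ω j (a + ((i : ℝ) - 1/2) * (b - a) / n) *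
              phiU a ω 0 (a + ((i : ℝ) - 1/2) * (b - a) / n)
            = (Real.sqrt 2 / n) * Real.cos (((i : ℝ) - 1/2) * ((((j:ℤ)):ℝ) * π / n)) := by
          intro i _
          simp only [phiU, if_pos rfl, if_neg hj0, mul_one]
          rw [node j i]
          push_cast
          ring
        rw [Finset.sum_congr rfl step, ← Finset.mul_sum,
          sumz j (by exact_mod_cast hj0) (by rw [abs_lt]; omega), mul_zero]
      · -- both ≥ 1
        have step : ∀ i ∈ Finset.Icc 1 n,
            (1 / (n : ℝ)) * phiU a ω j (a + ((i : ℝ) - 1/2) * (b - a) / n) *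
              phiU a ω k (a + ((i : ℝ) - 1/2) * (b - a) / n)
            = (1 / (n : ℝ)) * Real.cos (((i : ℝ) - 1/2) * (((((j:ℤ) - k):ℤ):ℝ) * π / n))
              + (1 / (n : ℝ)) * Real.cos (((i : ℝ) - 1/2) * (((((j:ℤ) + k):ℤ):ℝ) * π / n)) := by
          intro i _
          simp only [phiU, if_neg hj0, if_neg hk0]
          rw [node j i, node k i]
          rw [show (1 / (n : ℝ)) * (Real.sqrt 2 * Real.cos (((i : ℝ) - 1/2) * ((j:ℝ) * π / n)))
                * (Real.sqrt 2 * Real.cos (((i : ℝ) - 1/2) * ((k:ℝ) * π / n)))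
              = (Real.sqrt 2 * Real.sqrt 2) * ((1 / (n : ℝ)) *
                (Real.cos (((i : ℝ) - 1/2) * ((j:ℝ) * π / n)) *
                  Real.cos (((i : ℝ) - 1/2) * ((k:ℝ) * π / n)))) from by ring,
            h2, cos_prod,
            show ((i : ℝ) - 1/2) * ((j:ℝ) * π / n) - ((i : ℝ) - 1/2) * ((k:ℝ) * π / n)
              = ((i : ℝ) - 1/2) * (((((j:ℤ) - k):ℤ):ℝ) * π / n) from by push_cast; ring,
            show ((i : ℝ) - 1/2) * ((j:ℝ) * π / n) + ((i : ℝ) - 1/2) * ((k:ℝ) * π / n)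
              = ((i : ℝ) - 1/2) * (((((j:ℤ) + k):ℤ):ℝ) * π / n) from by push_cast; ring]
          ring
        rw [Finset.sum_congr rfl step, Finset.sum_add_distrib, ← Finset.mul_sum, ← Finset.mul_sum,
          sumz ((j:ℤ) + k) (by omega) (by rw [abs_lt]; omega), mul_zero, add_zero]
        by_cases hjk : j = k
        · subst hjk
          rw [if_pos rfl]
          have : ∀ i ∈ Finset.Icc 1 n,
              Real.cos (((i : ℝ) - 1/2) * (((((j:ℤ) - j):ℤ):ℝ) * π / n)) = 1 := by
            intro i _; simp
          rw [Finset.sum_congr rfl this, Finset.sum_const, Nat.card_Icc]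
          simp
          field_simp
        · rw [if_neg hjk, sumz ((j:ℤ) - k) (by omega) (by rw [abs_lt]; omega), mul_zero]
  · -- integral
    by_cases hj0 : j = 0
    · subst hj0
      by_cases hk0 : k = 0
      · subst hk0
        rw [if_pos rfl]
        simp only [phiU, if_true, eq_self_iff_true, mul_one]
        rw [intervalIntegral.integral_const]
        simp
        field_simp
      · rw [if_neg (by omega)]
        have : (fun x => phiU a ω 0 x * phiU a ω k x)
            = fun x => Real.sqrt 2 * Real.cos ((((k:ℤ)):ℝ) * ω * (x - a)) := by
          funext x; simp only [phiU, if_pos rfl, if_neg hk0, one_mul]; push_cast; ring_nf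
        rw [this, intervalIntegral.integral_const_mul, intz k (by exact_mod_cast hk0),
          mul_zero, mul_zero]
    · by_cases hk0 : k = 0
      · subst hk0
        rw [if_neg (by omega)]
        have : (fun x => phiU a ω j x * phiU a ω 0 x)
            = fun x => Real.sqrt 2 * Real.cos ((((j:ℤ)):ℝ) * ω * (x - a)) := by
          funext x; simp only [phiU, if_pos rfl, if_neg hj0, mul_one]; push_cast; ring_nf
        rw [this, intervalIntegral.integral_const_mul, intz j (by exact_mod_cast hj0),
          mul_zero, mul_zero]
      · have key : (fun x => phiU a ω j x * phiU a ω k x)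
            = fun x => Real.cos (((((j:ℤ) - k):ℤ):ℝ) * ω * (x - a))
                + Real.cos (((((j:ℤ) + k):ℤ):ℝ) * ω * (x - a)) := by
          funext x
          simp only [phiU, if_neg hj0, if_neg hk0]
          rw [show (Real.sqrt 2 * Real.cos ((j:ℝ) * ω * (x - a)))
                * (Real.sqrt 2 * Real.cos ((k:ℝ) * ω * (x - a)))
              = (Real.sqrt 2 * Real.sqrt 2) * (Real.cos ((j:ℝ) * ω * (x - a)) *
                  Real.cos ((k:ℝ) * ω * (x - a))) from by ring,
            h2, cos_prod,
            show (j:ℝ) * ω * (x - a) - (k:ℝ) * ω * (x - a)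
              = ((((j:ℤ) - k):ℤ):ℝ) * ω * (x - a) from by push_cast; ring,
            show (j:ℝ) * ω * (x - a) + (k:ℝ) * ω * (x - a)
              = ((((j:ℤ) + k):ℤ):ℝ) * ω * (x - a) from by push_cast; ring]
          ring
        rw [key, intervalIntegral.integral_add
          ((Continuous.intervalIntegrable (by fun_prop) a b))
          ((Continuous.intervalIntegrable (by fun_prop) a b)),
          intz ((j:ℤ) + k) (by omega), add_zero]
        by_cases hjk : j = k
        · subst hjk
          rw [if_pos rfl]
          have : (fun x => Real.cos (((((j:ℤ) - j):ℤ):ℝ) * ω * (x - a))) = fun _ => (1:ℝ) := by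
            funext x; simp
          rw [this, intervalIntegral.integral_const]
          simp
          field_simp
        · rw [if_neg hjk, intz ((j:ℤ) - k) (by omega), mul_zero]
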